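/- Let K be a real Banach algebra and let ι : K → C(Ω) be a continuous injective algebra homomorphism into the sup-normed algebra of continuous real functions on Ω. Suppose T : K → L(K,K) is a map such that for every f ∈ K, T(f) is a bounded linear operator on K satisfying ι(T(f)(φ)) = L_{ι(f)}(ι(φ)) for all φ ∈ K (i.e. T(f) realizes on K the Ruelle operator of the potential ι(f)). Then T is an analytic (Fréchet-analytic) map from K into the Banach space L(K,K) of bounded linear operators on K. -/

import Mathlib

open MeasureTheory Filter

noncomputable section

namespace Paper

variable {M : Type*} [MetricSpace M]

/-- Prepend one symbol: `ax = (a, x₁, x₂, …)`. -/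
def cons (a : M) (x : ℕ → M) : ℕ → M
  | 0 => a
  | n + 1 => x n

/-- Prepend a finite word `a ∈ Mⁿ`. -/
def consW {n : ℕ} (a : Fin n → M) (x : ℕ → M) : ℕ → M :=
  fun k => if h : k < n then a ⟨k, h⟩ else x (k - n)

/-- The left shift `σ`. -/
def shift (x : ℕ → M) : ℕ → M := fun n => x (n + 1)

/-- Birkhoff sum `Sₙ f = f + f∘σ + … + f∘σ^{n-1}`. -/
def birk (f : (ℕ → M) → ℝ) (n : ℕ) (x : ℕ → M) : ℝ :=
  ∑ i ∈ Finset.range n, f (shift^[i] x)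

/-- The metric `d_Ω(x,y) = Σ_{n≥1} 2^{-n} d(xₙ,yₙ)`. -/
def dOmega (x y : ℕ → M) : ℝ :=
  ∑' n : ℕ, (1 / 2 : ℝ) ^ (n + 1) * dist (x n) (y n)

/-- `dₙ(x,y) = max_{0 ≤ k < n} d_Ω(σᵏx, σᵏy)`. -/
def dN (n : ℕ) (x y : ℕ → M) : ℝ :=
  ⨆ k : Fin n, dOmega (shift^[(k : ℕ)] x) (shift^[(k : ℕ)] y)

/-- The (strong) Walters condition. -/
def Walters (f : (ℕ → M) → ℝ) : Prop :=
  ∀ ε : ℝ, 0 < ε → ∃ η : ℝ, 0 < η ∧ ∀ n : ℕ, 1 ≤ n → ∀ x y : ℕ → M,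
    dN n x y ≤ η → |birk f n x - birk f n y| ≤ ε

/-- `C_f(x,y) = sup_{n ≥ 1} sup_{a ∈ Mⁿ} (Sₙf(ax) − Sₙf(ay))`, a value in `(−∞,+∞]`. -/
def Cf (f : (ℕ → M) → ℝ) (x y : ℕ → M) : EReal :=
  ⨆ n : ℕ, ⨆ a : Fin (n + 1) → M,
    ((birk f (n + 1) (consW a x) - birk f (n + 1) (consW a y) : ℝ) : EReal)

/-- The weak Walters condition. -/
def WeakWalters (f : (ℕ → M) → ℝ) : Prop :=
  ∀ ε : ℝ, 0 < ε → ∃ δ : ℝ, 0 < δ ∧ ∀ x y : ℕ → M,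
    dOmega x y ≤ δ → Cf f x y ≤ (ε : EReal)

variable [MeasurableSpace M]

/-- The Ruelle operator `L_f φ(x) = ∫_M e^{f(ax)} φ(ax) dμ(a)`. -/
def ruelle (μ : Measure M) (f : (ℕ → M) → ℝ) (φ : (ℕ → M) → ℝ) : (ℕ → M) → ℝ :=
  fun x => ∫ a, Real.exp (f (cons a x)) * φ (cons a x) ∂μ

/-- The Ruelle operator with weight `g`: `Lφ(x) = ∫_M g(ax) φ(ax) dμ(a)`. -/
def ruelleG (μ : Measure M) (g : (ℕ → M) → ℝ) (φ : (ℕ → M) → ℝ) : (ℕ → M) → ℝ :=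
  fun x => ∫ a, g (cons a x) * φ (cons a x) ∂μ

/-- If `K` is a real Banach algebra, `ι : K → C(Ω)` a continuous injective
algebra homomorphism, and `T : K → L(K,K)` realizes on `K` the Ruelle operator of the
potential `ι f` (i.e. `ι (T f φ) = L_{ι f} (ι φ)` for all `φ ∈ K`), then `T` is
Fréchet-analytic. -/
theorem statement0
    [CompactSpace M] [BorelSpace M]
    (μ : Measure M) [IsProbabilityMeasure μ]
    {K : Type*} [NormedRing K] [NormedAlgebra ℝ K] [CompleteSpace K]
    (ι : K →ₐ[ℝ] C(ℕ → M, ℝ))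
    (hι : Continuous fun k : K => ι k)
    (hinj : Function.Injective fun k : K => ι k)
    (T : K → K →L[ℝ] K)
    (hT : ∀ (f φ : K) (x : ℕ → M),
      ι (T f φ) x = ∫ a, Real.exp (ι f (cons a x)) * (ι φ) (cons a x) ∂μ) :
    ∀ f : K, AnalyticAt ℝ T f := by
  let +nondep : NormedAlgebra ℚ K := .restrictScalars ℚ ℝ K
  have hιexp : ∀ f : K, ι (NormedSpace.exp f) = NormedSpace.exp (ι f) :=
    fun f => NormedSpace.map_exp ι.toRingHom hι f
  have hevalexp : ∀ (g : C(ℕ → M, ℝ)) (x : ℕ → M),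
      NormedSpace.exp g x = Real.exp (g x) := by
    intro g x
    rw [Real.exp_eq_exp_ℝ]
    simpa using (NormedSpace.map_exp
      ((ContinuousMap.evalAlgHom ℝ ℝ x : C(ℕ → M, ℝ) →ₐ[ℝ] ℝ) : C(ℕ → M, ℝ) →+* ℝ)
      (continuous_eval_const x) g)
  have key : ∀ f φ : K, T f φ = T 0 (NormedSpace.exp f * φ) := by
    intro f φ
    apply hinj
    ext x
    simp only
    rw [hT, hT]
    congr 1
    ext a
    rw [map_zero]
    simp only [ContinuousMap.zero_apply, Real.exp_zero, one_mul]
    rw [map_mul, ContinuousMap.mul_apply, hιexp, hevalexp]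
  set L : K →L[ℝ] (K →L[ℝ] K) :=
    (ContinuousLinearMap.compL ℝ K K K (T 0)).comp (ContinuousLinearMap.mul ℝ K) with hL
  have hTeq : T = fun f => L (NormedSpace.exp f) := by
    funext f
    ext φ
    simp [hL, key f φ]
  intro f
  rw [hTeq]
  exact (L.analyticAt (NormedSpace.exp f)).comp (NormedSpace.exp_analytic (𝕂 := ℝ) f)

end Paper
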